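/- Let λ ∈ ℂ with |λ| > 1. If n is even, then T(H_m(λ), J_n(0)) = ℂ^{n×2m} × ℂ^{2m×n}, i.e., the map (S,R) ↦ (S*·H_m(λ) + J_n(0)·R, R*·J_n(0) + H_m(λ)·S) with S ∈ ℂ^{2m×n}, R ∈ ℂ^{n×2m} is surjective. If n is odd, then for every pair (B,A) ∈ ℂ^{n×2m} × ℂ^{2m×n} there exists exactly one matrix D ∈ ℂ^{n×2m} whose nonzero entries are confined to the first row such that (B − D, A) ∈ T(H_m(λ), J_n(0)); that is, ℂ^{n×2m} × ℂ^{2m×n} = T(H_m(λ), J_n(0)) ⊕_ℝ (V × {0}), where V is the subspace of matrices supported in the first row. -/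

import Mathlib

open Matrix

/-- The `n×n` upper-triangular Jordan block with eigenvalue `l`. -/
noncomputable def Jmat (n : ℕ) (l : ℂ) : Matrix (Fin n) (Fin n) ℂ :=
  Matrix.of fun i j =>
    if (i : ℕ) = (j : ℕ) then l
    else if (j : ℕ) = (i : ℕ) + 1 then 1 else 0

/-- The symmetric matrix `Δ_n`: (1-based) entry `(j,k)` is `1` if `j+k = n+1`,
`i` if `j+k = n+2`, and `0` otherwise. -/
noncomputable def Dmat (n : ℕ) : Matrix (Fin n) (Fin n) ℂ :=
  Matrix.of fun i j =>
    if (i : ℕ) + (j : ℕ) + 1 = n then 1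
    else if (i : ℕ) + (j : ℕ) = n then Complex.I
    else 0

/-- The `2m×2m` block matrix `H_m(l) = [[0, I],[J_m(l), 0]]`. -/
noncomputable def Hmat (m : ℕ) (l : ℂ) : Matrix (Fin m ⊕ Fin m) (Fin m ⊕ Fin m) ℂ :=
  Matrix.fromBlocks 0 1 (Jmat m l) 0

/-- `T(A) = {CᴴA + AC}`, the tangent space to the *congruence class of `A`. -/
def Tset {n : Type*} [Fintype n] (A : Matrix n n ℂ) : Set (Matrix n n ℂ) :=
  {X | ∃ C : Matrix n n ℂ, X = Cᴴ * A + A * C}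

/-- `T(M,N) = {(SᴴM + NR, RᴴN + MS)}`. -/
def Tpair {p q : Type*} [Fintype p] [Fintype q]
    (M : Matrix p p ℂ) (N : Matrix q q ℂ) :
    Set (Matrix q p ℂ × Matrix p q ℂ) :=
  {X | ∃ (S : Matrix p q ℂ) (R : Matrix q p ℂ),
      X = (Sᴴ * M + N * R, Rᴴ * N + M * S)}


namespace Stmt18Aux
set_option linter.unusedSectionVars false

set_option linter.unusedSectionVars false


variable {α : Type*} [Fintype α] [DecidableEq α]

lemma two_step {P : ℕ → Prop} (h0 : P 0) (h1 : P 1) (h : ∀ i, P i → P (i + 2)) :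
    ∀ i, P i := by
  intro i
  induction i using Nat.strong_induction_on with
  | _ i ih =>
    match i with
    | 0 => exact h0
    | 1 => exact h1
    | (j + 2) => exact h j (ih j (by omega))

noncomputable def rowrec (K : Matrix α α ℂ) (C : ℕ → α → ℂ) (x : α → ℂ) : ℕ → α → ℂ
  | 0 => x
  | 1 => C 0
  | (i + 2) => C (i + 1) + (rowrec K C x i) ᵥ* K

lemma rowrec_two (K : Matrix α α ℂ) (C : ℕ → α → ℂ) (x : α → ℂ) (i : ℕ) :
    rowrec K C x (i + 2) = C (i + 1) + (rowrec K C x i) ᵥ* K := rfl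

lemma rowrec_even (K : Matrix α α ℂ) (C : ℕ → α → ℂ) (x : α → ℂ) (j : ℕ) :
    rowrec K C x (2 * j) = rowrec K C 0 (2 * j) + x ᵥ* (K ^ j) := by
  induction j with
  | zero => simp [rowrec]
  | succ j ih =>
    have h2 : 2 * (j + 1) = 2 * j + 2 := by ring
    rw [h2, rowrec_two, rowrec_two, ih, Matrix.add_vecMul, Matrix.vecMul_vecMul,
      ← pow_succ, add_assoc]

lemma rowrec_odd (K : Matrix α α ℂ) (C : ℕ → α → ℂ) (x : α → ℂ) (j : ℕ) :
    rowrec K C x (2 * j + 1) = rowrec K C 0 (2 * j + 1) := by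
  induction j with
  | zero => rfl
  | succ j ih =>
    have h2 : 2 * (j + 1) + 1 = (2 * j + 1) + 2 := by ring
    rw [h2, rowrec_two, rowrec_two, ih]

lemma rowrec_sub (K : Matrix α α ℂ) (C C' : ℕ → α → ℂ) (i : ℕ) :
    rowrec K (C - C') 0 i = rowrec K C 0 i - rowrec K C' 0 i := by
  induction i using two_step with
  | h0 => simp [rowrec]
  | h1 => simp [rowrec]
  | h i ih =>
    rw [rowrec_two, rowrec_two, rowrec_two, ih, Matrix.sub_vecMul]
    funext c
    simp only [Pi.add_apply, Pi.sub_apply]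
    ring

lemma rowrec_single_even (K : Matrix α α ℂ) (d : α → ℂ) (j : ℕ) :
    rowrec K (fun i => if i = 0 then d else 0) 0 (2 * j) = 0 := by
  induction j with
  | zero => rfl
  | succ j ih =>
    have h2 : 2 * (j + 1) = 2 * j + 2 := by ring
    rw [h2, rowrec_two, ih]
    simp

lemma rowrec_single_odd (K : Matrix α α ℂ) (d : α → ℂ) (j : ℕ) :
    rowrec K (fun i => if i = 0 then d else 0) 0 (2 * j + 1) = d ᵥ* (K ^ j) := by
  induction j with
  | zero => simp [rowrec]
  | succ j ih =>
    have h2 : 2 * (j + 1) + 1 = (2 * j + 1) + 2 := by ring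
    rw [h2, rowrec_two, ih, Matrix.vecMul_vecMul, ← pow_succ]
    simp

lemma invpow_mul_pow (K : Matrix α α ℂ) (h : K⁻¹ * K = 1) (j : ℕ) :
    K⁻¹ ^ j * K ^ j = 1 := by
  induction j with
  | zero => simp
  | succ j ih =>
    rw [pow_succ, pow_succ', mul_assoc, ← mul_assoc K⁻¹ K, h, one_mul, ih]

lemma pow_mul_invpow (K : Matrix α α ℂ) (h : K * K⁻¹ = 1) (j : ℕ) :
    K ^ j * K⁻¹ ^ j = 1 := by
  induction j with
  | zero => simp
  | succ j ih =>
    rw [pow_succ, pow_succ', mul_assoc, ← mul_assoc K K⁻¹, h, one_mul, ih]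



variable {α : Type*} [Fintype α] [DecidableEq α]

lemma Jmat_zero_apply (n : ℕ) (i j : Fin n) :
    Jmat n 0 i j = if (j : ℕ) = (i : ℕ) + 1 then 1 else 0 := by
  simp only [Jmat, Matrix.of_apply]
  by_cases h : (i : ℕ) = (j : ℕ)
  · rw [if_pos h, if_neg (by omega)]
  · rw [if_neg h]

lemma JmatH_apply (n : ℕ) (i j : Fin n) :
    (Jmat n 0)ᴴ i j = if (i : ℕ) = (j : ℕ) + 1 then 1 else 0 := by
  rw [Matrix.conjTranspose_apply, Jmat_zero_apply]
  split <;> simp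

lemma Jmul_apply {n : ℕ} (R : Matrix (Fin n) α ℂ) (i : Fin n) (c : α) :
    (Jmat n 0 * R) i c = if h : (i : ℕ) + 1 < n then R ⟨(i : ℕ) + 1, h⟩ c else 0 := by
  rw [Matrix.mul_apply]
  split
  case isTrue h =>
    rw [Finset.sum_eq_single (⟨(i : ℕ) + 1, h⟩ : Fin n)]
    · rw [Jmat_zero_apply, if_pos rfl, one_mul]
    · intro b _ hb
      rw [Jmat_zero_apply, if_neg, zero_mul]
      intro hc; exact hb (Fin.ext hc)
    · simp
  case isFalse h =>
    apply Finset.sum_eq_zero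
    intro b _
    rw [Jmat_zero_apply, if_neg, zero_mul]
    intro hc; have := b.isLt; omega

lemma JHmul_apply {n : ℕ} (R : Matrix (Fin n) α ℂ) (i : Fin n) (c : α) :
    ((Jmat n 0)ᴴ * R) i c =
      if 0 < (i : ℕ) then
        R ⟨(i : ℕ) - 1, Nat.lt_of_le_of_lt (Nat.sub_le _ 1) i.isLt⟩ c
      else 0 := by
  rw [Matrix.mul_apply]
  split
  case isTrue h =>
    rw [Finset.sum_eq_single (⟨(i : ℕ) - 1, Nat.lt_of_le_of_lt (Nat.sub_le _ 1) i.isLt⟩ : Fin n)]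
    · rw [JmatH_apply]
      simp only [Fin.val_mk]
      rw [if_pos (by omega), one_mul]
    · intro b _ hb
      rw [JmatH_apply, if_neg, zero_mul]
      intro hc
      exact hb (Fin.ext (by simp only [Fin.val_mk]; omega))
    · simp
  case isFalse h =>
    apply Finset.sum_eq_zero
    intro b _
    rw [JmatH_apply, if_neg, zero_mul]
    omega

lemma mulK_apply {n : ℕ} (X : Matrix (Fin n) α ℂ) (K : Matrix α α ℂ) (i : Fin n) (c : α) :
    (X * K) i c = (X i ᵥ* K) c := by
  simp [Matrix.mul_apply, Matrix.vecMul, dotProduct]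

lemma phi_apply {n : ℕ} (K : Matrix α α ℂ) (R : Matrix (Fin n) α ℂ) (i : Fin n) (c : α) :
    (Jmat n 0 * R - (Jmat n 0)ᴴ * R * K) i c =
      (if h : (i : ℕ) + 1 < n then R ⟨(i : ℕ) + 1, h⟩ c else 0) -
      (if 0 < (i : ℕ) then
        (R ⟨(i : ℕ) - 1, Nat.lt_of_le_of_lt (Nat.sub_le _ 1) i.isLt⟩ ᵥ* K) c
      else 0) := by
  rw [Matrix.sub_apply, Jmul_apply, mulK_apply]
  congr 1
  by_cases h : 0 < (i : ℕ)
  · rw [if_pos h]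
    have hrow : ((Jmat n 0)ᴴ * R) i =
        R ⟨(i : ℕ) - 1, Nat.lt_of_le_of_lt (Nat.sub_le _ 1) i.isLt⟩ := by
      funext j
      rw [JHmul_apply, if_pos h]
    rw [hrow]
  · rw [if_neg h]
    have hrow : ((Jmat n 0)ᴴ * R) i = 0 := by
      funext j
      rw [JHmul_apply, if_neg h]
      rfl
    rw [hrow, Matrix.zero_vecMul]
    rfl


noncomputable def padC {n : ℕ} (C : Matrix (Fin n) α ℂ) : ℕ → α → ℂ :=
  fun i => if h : i < n then C ⟨i, h⟩ else 0

lemma solve_of {n : ℕ} (K : Matrix α α ℂ) (C : Matrix (Fin n) α ℂ) (x : α → ℂ)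
    (hx : rowrec K (padC C) x n = 0) :
    ∃ R : Matrix (Fin n) α ℂ, Jmat n 0 * R - (Jmat n 0)ᴴ * R * K = C := by
  refine ⟨(Matrix.of fun i c => rowrec K (padC C) x (i : ℕ) c : Matrix (Fin n) α ℂ), ?_⟩
  ext i c
  rw [phi_apply]
  rcases i with ⟨k, hk⟩
  simp only [Fin.val_mk]
  cases k with
  | zero =>
    rw [if_neg (lt_irrefl 0), sub_zero]
    by_cases h1 : 0 + 1 < n
    · rw [dif_pos h1]
      show padC C 0 c = C ⟨0, hk⟩ c
      simp [padC, hk]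
    · rw [dif_neg h1]
      have h1' : n = 1 := by omega
      have := congrFun hx c
      subst h1'
      have h2 : rowrec K (padC C) x 1 c = C ⟨0, hk⟩ c := by
        show padC C 0 c = C ⟨0, hk⟩ c
        simp [padC, hk]
      rw [h2] at this
      rw [this]
      rfl
  | succ j =>
    rw [if_pos (Nat.succ_pos j)]
    simp only [Nat.add_sub_cancel]
    by_cases h1 : j + 1 + 1 < n
    · rw [dif_pos h1]
      show rowrec K (padC C) x (j + 2) c - (rowrec K (padC C) x j ᵥ* K) c = C ⟨j + 1, hk⟩ c
      rw [rowrec_two]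
      have hp : padC C (j + 1) = C ⟨j + 1, hk⟩ := by simp [padC, hk]
      rw [hp]
      simp only [Pi.add_apply]
      ring
    · rw [dif_neg h1]
      have h1' : n = j + 2 := by omega
      subst h1'
      have := congrFun hx c
      rw [rowrec_two] at this
      have hp : padC C (j + 1) = C ⟨j + 1, hk⟩ := by simp [padC, hk]
      rw [hp] at this
      simp only [Pi.add_apply, Pi.zero_apply] at this
      show 0 - (rowrec K (padC C) x j ᵥ* K) c = C ⟨j + 1, hk⟩ c
      linear_combination -this

lemma rows_eq {n : ℕ} (K : Matrix α α ℂ) (C R : Matrix (Fin n) α ℂ) (hn : 0 < n)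
    (hR : Jmat n 0 * R - (Jmat n 0)ᴴ * R * K = C) :
    rowrec K (padC C) (R ⟨0, hn⟩) n = 0 := by
  have E : ∀ (i : Fin n) (c : α),
      (if h : (i : ℕ) + 1 < n then R ⟨(i : ℕ) + 1, h⟩ c else 0) -
      (if 0 < (i : ℕ) then
        (R ⟨(i : ℕ) - 1, Nat.lt_of_le_of_lt (Nat.sub_le _ 1) i.isLt⟩ ᵥ* K) c
      else 0) = C i c := by
    intro i c
    rw [← phi_apply, hR]
  have main : ∀ i, ∀ h : i < n, R ⟨i, h⟩ = rowrec K (padC C) (R ⟨0, hn⟩) i := by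
    refine two_step ?_ ?_ ?_
    · intro h; rfl
    · intro h
      funext c
      have h0 := E ⟨0, hn⟩ c
      simp only [Fin.val_mk] at h0
      rw [dif_pos h, if_neg (lt_irrefl 0), sub_zero] at h0
      rw [h0]
      show C ⟨0, hn⟩ c = padC C 0 c
      simp [padC, hn]
    · intro j ih h
      funext c
      have hj1 : j + 1 < n := by omega
      have h0 := E ⟨j + 1, hj1⟩ c
      simp only [Fin.val_mk, Nat.add_sub_cancel] at h0
      rw [dif_pos h, if_pos (Nat.succ_pos j), ih (by omega)] at h0
      rw [rowrec_two]
      have hp : padC C (j + 1) = C ⟨j + 1, hj1⟩ := by simp [padC, hj1]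
      rw [hp]
      simp only [Pi.add_apply]
      linear_combination h0
  match n, hn, C, R, E, main with
  | Nat.succ 0, hn, C, R, E, main => 
    funext c
    have h0 := E ⟨0, hn⟩ c
    simp only [Fin.val_mk] at h0
    rw [dif_neg (by omega), if_neg (lt_irrefl 0), sub_zero] at h0
    have h2 : rowrec K (padC C) (R ⟨0, hn⟩) 1 c = C ⟨0, hn⟩ c := by
      show padC C 0 c = C ⟨0, hn⟩ c
      simp [padC]
    rw [h2, ← h0]
    rfl
  | Nat.succ (Nat.succ j), hn, C, R, E, main =>
    funext c
    have hj1 : j + 1 < j + 2 := by omega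
    have h0 := E ⟨j + 1, hj1⟩ c
    simp only [Fin.val_mk, Nat.add_sub_cancel] at h0
    rw [dif_neg (by omega), if_pos (Nat.succ_pos j), main j (by omega)] at h0
    rw [rowrec_two]
    have hp : padC C (j + 1) = C ⟨j + 1, hj1⟩ := by simp [padC, hj1]
    rw [hp]
    simp only [Pi.add_apply, Pi.zero_apply]
    linear_combination -h0



lemma solvable_iff {p q : Type*} [Fintype p] [DecidableEq p] [Fintype q] [DecidableEq q]
    (H : Matrix p p ℂ) (N : Matrix q q ℂ) (hH : IsUnit H.det)
    (B : Matrix q p ℂ) (A : Matrix p q ℂ) :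
    (∃ (S : Matrix p q ℂ) (R : Matrix q p ℂ),
        B = Sᴴ * H + N * R ∧ A = Rᴴ * N + H * S) ↔
    ∃ R : Matrix q p ℂ,
      N * R - Nᴴ * R * (Hᴴ⁻¹ * H) = B - Aᴴ * (Hᴴ⁻¹ * H) := by
  have hH' : IsUnit (Hᴴ).det := by
    rw [Matrix.det_conjTranspose]; exact hH.star
  constructor
  · rintro ⟨S, R, hB, hA⟩
    refine ⟨R, ?_⟩
    have key : Sᴴ * Hᴴ * (Hᴴ⁻¹ * H) = Sᴴ * H := by
      rw [Matrix.mul_assoc, ← Matrix.mul_assoc Hᴴ, Matrix.mul_nonsing_inv _ hH',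
        Matrix.one_mul]
    subst hB; subst hA
    rw [Matrix.conjTranspose_add, Matrix.conjTranspose_mul, Matrix.conjTranspose_mul,
      Matrix.conjTranspose_conjTranspose, Matrix.add_mul, key]
    abel
  · rintro ⟨R, hR⟩
    refine ⟨H⁻¹ * (A - Rᴴ * N), R, ?_, ?_⟩
    · have h1 : (H⁻¹ * (A - Rᴴ * N))ᴴ = (Aᴴ - Nᴴ * R) * Hᴴ⁻¹ := by
        rw [Matrix.conjTranspose_mul, Matrix.conjTranspose_nonsing_inv,
          Matrix.conjTranspose_sub, Matrix.conjTranspose_mul,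
          Matrix.conjTranspose_conjTranspose]
      rw [h1, Matrix.mul_assoc, Matrix.sub_mul]
      have h2 : B = Aᴴ * (Hᴴ⁻¹ * H) + (N * R - Nᴴ * R * (Hᴴ⁻¹ * H)) := by
        rw [hR]; abel
      rw [h2]; abel
    · rw [← Matrix.mul_assoc, Matrix.mul_nonsing_inv _ hH, Matrix.one_mul]
      abel

lemma det_Jmat (k : ℕ) (l : ℂ) : (Jmat k l).det = l ^ k := by
  rw [Matrix.det_of_upperTriangular (M := Jmat k l)]
  · have h : ∀ i : Fin k, Jmat k l i i = l := by
      intro i; simp [Jmat]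
    calc (∏ i, Jmat k l i i) = ∏ _i : Fin k, l :=
          Finset.prod_congr rfl (fun i _ => h i)
    _ = l ^ k := by simp [Finset.prod_const]
  · intro i j hji
    have hj : (j : ℕ) < (i : ℕ) := hji
    simp only [Jmat, Matrix.of_apply]
    rw [if_neg (by omega), if_neg (by omega)]

lemma Hmul (m : ℕ) (l : ℂ) :
    Hmat m l * Hmat m l = Matrix.fromBlocks (Jmat m l) 0 0 (Jmat m l) := by
  rw [Hmat, Matrix.fromBlocks_multiply]
  simp

lemma det_Hmat_ne (m : ℕ) (l : ℂ) (hl : l ≠ 0) : (Hmat m l).det ≠ 0 := by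
  have h2 : (Hmat m l).det * (Hmat m l).det = l ^ m * l ^ m := by
    rw [← Matrix.det_mul, Hmul, Matrix.det_fromBlocks_zero₂₁, det_Jmat]
  intro h
  rw [h, zero_mul] at h2
  exact pow_ne_zero m hl (mul_self_eq_zero.mp h2.symm)


end Stmt18Aux

theorem stmt18 (m n : ℕ) (l : ℂ) (hl : 1 < ‖l‖) :
    (n % 2 = 0 →
      ∀ (B : Matrix (Fin n) (Fin m ⊕ Fin m) ℂ)
        (A : Matrix (Fin m ⊕ Fin m) (Fin n) ℂ),
        ∃ (S : Matrix (Fin m ⊕ Fin m) (Fin n) ℂ)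
          (R : Matrix (Fin n) (Fin m ⊕ Fin m) ℂ),
          B = Sᴴ * Hmat m l + Jmat n 0 * R ∧
          A = Rᴴ * Jmat n 0 + Hmat m l * S) ∧
    (n % 2 = 1 →
      ∀ (B : Matrix (Fin n) (Fin m ⊕ Fin m) ℂ)
        (A : Matrix (Fin m ⊕ Fin m) (Fin n) ℂ),
        ∃! D : Matrix (Fin n) (Fin m ⊕ Fin m) ℂ,
          (∀ (p : Fin n) (q : Fin m ⊕ Fin m), D p q ≠ 0 → (p : ℕ) = 0) ∧
          (B - D, A) ∈ Tpair (Hmat m l) (Jmat n 0)) := by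
  classical
  open Stmt18Aux in
  have hl0 : l ≠ 0 := by
    intro h; rw [h, norm_zero] at hl; exact absurd hl (by norm_num)
  have hdet : IsUnit (Hmat m l).det :=
    isUnit_iff_ne_zero.mpr (Stmt18Aux.det_Hmat_ne m l hl0)
  have hdetH : IsUnit ((Hmat m l)ᴴ).det := by
    rw [Matrix.det_conjTranspose]; exact hdet.star
  set H := Hmat m l with hHdef
  set K : Matrix (Fin m ⊕ Fin m) (Fin m ⊕ Fin m) ℂ := Hᴴ⁻¹ * H with hKdef
  have hK1 : K * (H⁻¹ * Hᴴ) = 1 := by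
    rw [hKdef, Matrix.mul_assoc, ← Matrix.mul_assoc H, Matrix.mul_nonsing_inv _ hdet,
      Matrix.one_mul, Matrix.nonsing_inv_mul _ hdetH]
  have hdetK : IsUnit K.det := Matrix.isUnit_det_of_right_inverse hK1
  have hKl : K⁻¹ * K = 1 := Matrix.nonsing_inv_mul _ hdetK
  have hKr : K * K⁻¹ = 1 := Matrix.mul_nonsing_inv _ hdetK
  constructor
  · -- even case
    intro hev B A
    refine (Stmt18Aux.solvable_iff H (Jmat n 0) hdet B A).mpr ?_
    obtain ⟨j, rfl⟩ : ∃ j, n = 2 * j := ⟨n / 2, by omega⟩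
    set C := B - Aᴴ * K with hCdef
    refine Stmt18Aux.solve_of K C
      (-((Stmt18Aux.rowrec K (Stmt18Aux.padC C) 0 (2 * j)) ᵥ* (K⁻¹ ^ j))) ?_
    rw [Stmt18Aux.rowrec_even, Matrix.neg_vecMul, Matrix.vecMul_vecMul,
      Stmt18Aux.invpow_mul_pow _ hKl, Matrix.vecMul_one]
    simp
  · -- odd case
    intro hodd B A
    obtain ⟨j, rfl⟩ : ∃ j, n = 2 * j + 1 := ⟨n / 2, by omega⟩
    have hn : 0 < 2 * j + 1 := by omega
    set C := B - Aᴴ * K with hCdef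
    set r0 := Stmt18Aux.rowrec K (Stmt18Aux.padC C) 0 (2 * j + 1) with hr0
    have mem_iff : ∀ D : Matrix (Fin (2 * j + 1)) (Fin m ⊕ Fin m) ℂ,
        (∀ p q, D p q ≠ 0 → (p : ℕ) = 0) →
        ((B - D, A) ∈ Tpair H (Jmat (2 * j + 1) 0) ↔
          (D ⟨0, hn⟩) ᵥ* (K ^ j) = r0) := by
      intro D hD
      have hpad : Stmt18Aux.padC (C - D) =
          (Stmt18Aux.padC C) - (fun i => if i = 0 then D ⟨0, hn⟩ else 0) := by
        funext i
        by_cases h : i < 2 * j + 1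
        · simp only [Stmt18Aux.padC, dif_pos h, Pi.sub_apply]
          rcases Nat.eq_zero_or_pos i with h0 | h0
          · subst h0
            rw [if_pos rfl]
            funext c
            simp [Matrix.sub_apply]
          · rw [if_neg (by omega)]
            have hDrow : ∀ c, D ⟨i, h⟩ c = 0 := by
              intro c
              by_contra hc
              have := hD _ _ hc
              simp only [Fin.val_mk] at this
              omega
            funext c
            simp [Matrix.sub_apply, hDrow c]
        · simp only [Stmt18Aux.padC, dif_neg h, Pi.sub_apply]
          rw [if_neg (by omega)]
          simp
      constructor
      · rintro ⟨S, R, hSR⟩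
        have hB : B - D = Sᴴ * H + Jmat (2 * j + 1) 0 * R := congrArg Prod.fst hSR
        have hA : A = Rᴴ * Jmat (2 * j + 1) 0 + H * S := congrArg Prod.snd hSR
        obtain ⟨R', hR'⟩ :=
          (Stmt18Aux.solvable_iff H (Jmat (2 * j + 1) 0) hdet (B - D) A).mp ⟨S, R, hB, hA⟩
        have hBD : (B - D) - Aᴴ * K = C - D := by rw [hCdef]; abel
        rw [hBD] at hR'
        have hlast := Stmt18Aux.rows_eq K (C - D) R' hn hR'
        rw [Stmt18Aux.rowrec_odd, hpad, Stmt18Aux.rowrec_sub,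
          Stmt18Aux.rowrec_single_odd] at hlast
        rw [← hr0] at hlast
        exact (sub_eq_zero.mp hlast).symm
      · intro hd
        have h0 : Stmt18Aux.rowrec K (Stmt18Aux.padC (C - D)) 0 (2 * j + 1) = 0 := by
          rw [hpad, Stmt18Aux.rowrec_sub, Stmt18Aux.rowrec_single_odd, hd, ← hr0, sub_self]
        obtain ⟨R', hR'⟩ := Stmt18Aux.solve_of K (C - D) 0 h0
        have hBD : C - D = (B - D) - Aᴴ * K := by rw [hCdef]; abel
        rw [hBD] at hR'
        obtain ⟨S, R, h1, h2⟩ :=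
          (Stmt18Aux.solvable_iff H (Jmat (2 * j + 1) 0) hdet (B - D) A).mpr ⟨R', hR'⟩
        exact ⟨S, R, by rw [Prod.mk.injEq]; exact ⟨h1, h2⟩⟩
    refine ⟨Matrix.of (fun p c => if (p : ℕ) = 0 then (r0 ᵥ* (K⁻¹ ^ j)) c else 0),
      ⟨?_, ?_⟩, ?_⟩
    · intro p c hpc
      by_contra h
      apply hpc
      simp only [Matrix.of_apply]
      rw [if_neg h]
    · apply (mem_iff _ ?_).mpr
      · have hD0 : (Matrix.of (fun p c => if (p : ℕ) = 0 then (r0 ᵥ* (K⁻¹ ^ j)) c else 0) :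
            Matrix (Fin (2 * j + 1)) (Fin m ⊕ Fin m) ℂ) ⟨0, hn⟩ = r0 ᵥ* (K⁻¹ ^ j) := by
          funext c
          simp
        rw [hD0, Matrix.vecMul_vecMul, Stmt18Aux.invpow_mul_pow _ hKl, Matrix.vecMul_one]
      · intro p c hpc
        by_contra h
        apply hpc
        simp only [Matrix.of_apply]
        rw [if_neg h]
    · rintro D' ⟨hsup', hmem'⟩
      have hkey := (mem_iff D' hsup').mp hmem'
      have hrow : D' ⟨0, hn⟩ = r0 ᵥ* (K⁻¹ ^ j) := by
        rw [← hkey, Matrix.vecMul_vecMul, Stmt18Aux.pow_mul_invpow _ hKr, Matrix.vecMul_one]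
      ext p c
      simp only [Matrix.of_apply, Fin.val_mk]
      rcases Nat.eq_zero_or_pos (p : ℕ) with h0 | h0
      · have hp : p = ⟨0, hn⟩ := Fin.ext h0
        subst hp
        rw [hrow]
        simp
      · rw [if_neg (by omega)]
        by_contra hc
        have := hsup' p c hc
        omega
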